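/- Let τ > 0, r > 0, θ ∈ ℝ, and consider the quadratic function of (ṙ, θ̇): f(ṙ,θ̇) = cosh(r)ṙ² + sinh(r)tanh(r)θ̇² + (Δ²/cosh(r))·((ṙ + τ^{−1}sinh(r))sin θ + θ̇ tanh(r)cos θ)²/(T̄ + Δ tanh(r)cos θ)², where T̄ > Δ > 0. Then f is a strictly convex quadratic in (ṙ,θ̇) (its Hessian, the matrix A in the text, is positive definite), and therefore has a unique global minimizer given by ṙ = −τ^{−1}h(r,θ) sinh(r) sin θ and θ̇ = −τ^{−1}h(r,θ) cosh(r) cos θ, with h(r,θ) = tanh(r)² sin θ / ((T̄/Δ + cos θ tanh r)² sinh(r)² + tanh(r)²). -/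

import Mathlib

set_option maxHeartbeats 1000000 in
/-- The total entropy production rate in the 2D Gaussian case, as a quadratic
function of the velocities `(ṙ, θ̇)`, is strictly convex and has the unique
global minimizer `ṙ = −τ⁻¹ h sinh r sin θ`, `θ̇ = −τ⁻¹ h cosh r cos θ`. -/
theorem entropy_rate_unique_minimizer_2D
    (τ Tb Δ r θ : ℝ) (hτ : 0 < τ) (hΔ : 0 < Δ) (hTb : Δ < Tb) (hr : 0 < r)
    (f : ℝ → ℝ → ℝ)
    (hf : ∀ rdot θdot, f rdot θdot =
      Real.cosh r * rdot ^ 2 + Real.sinh r * Real.tanh r * θdot ^ 2 +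
        (Δ ^ 2 / Real.cosh r) *
          ((rdot + τ⁻¹ * Real.sinh r) * Real.sin θ +
              θdot * Real.tanh r * Real.cos θ) ^ 2 /
            (Tb + Δ * Real.tanh r * Real.cos θ) ^ 2)
    (h : ℝ)
    (hh : h = Real.tanh r ^ 2 * Real.sin θ /
      ((Tb / Δ + Real.cos θ * Real.tanh r) ^ 2 * Real.sinh r ^ 2 +
        Real.tanh r ^ 2))
    (rdots θdots : ℝ)
    (hrdots : rdots = -τ⁻¹ * h * Real.sinh r * Real.sin θ)
    (hθdots : θdots = -τ⁻¹ * h * Real.cosh r * Real.cos θ) :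
    StrictConvexOn ℝ Set.univ (fun p : ℝ × ℝ => f p.1 p.2) ∧
    (∀ a b : ℝ, f rdots θdots ≤ f a b) ∧
    (∀ a b : ℝ, f a b = f rdots θdots → a = rdots ∧ b = θdots) := by
  have hτne : τ ≠ 0 := ne_of_gt hτ
  have hc : 0 < Real.cosh r := Real.cosh_pos r
  have hS : 0 < Real.sinh r := Real.sinh_pos_iff.mpr hr
  have hcne : Real.cosh r ≠ 0 := ne_of_gt hc
  have hSne : Real.sinh r ≠ 0 := ne_of_gt hS
  have hΔne : Δ ≠ 0 := ne_of_gt hΔ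
  have pyth : Real.sin θ ^ 2 + Real.cos θ ^ 2 = 1 := Real.sin_sq_add_cos_sq θ
  have htanh : Real.tanh r = Real.sinh r / Real.cosh r := Real.tanh_eq_sinh_div_cosh r
  have hE : 0 < Tb * Real.cosh r + Δ * Real.sinh r * Real.cos θ := by
    nlinarith [Real.sinh_lt_cosh r, Real.neg_one_le_cos θ, Real.cos_le_one θ,
      mul_pos hΔ hS]
  rw [htanh] at hf hh
  set c := Real.cosh r with hcdef
  set S := Real.sinh r with hSdef
  set s := Real.sin θ with hsdef
  set k := Real.cos θ with hkdef
  have hEne : Tb * c + Δ * S * k ≠ 0 := ne_of_gt hE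
  have key : h * ((Tb * c + Δ * S * k) ^ 2 + Δ ^ 2) = Δ ^ 2 * s := by
    rw [hh]; field_simp
  have hDeq : Tb + Δ * (S / c) * k = (Tb * c + Δ * S * k) / c := by
    field_simp
  set M := Δ ^ 2 * c / (Tb * c + Δ * S * k) ^ 2 with hMdef
  have hM : 0 ≤ M := by positivity
  have gform : ∀ a b, f a b = c * a ^ 2 + S ^ 2 / c * b ^ 2 +
      M * ((a + τ⁻¹ * S) * s + b * (S / c) * k) ^ 2 := by
    intro a b
    rw [hf, hDeq, hMdef]
    field_simp
  have stat1 : c * rdots + M * ((rdots + τ⁻¹ * S) * s + θdots * (S / c) * k) * s = 0 := by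
    rw [hrdots, hθdots, hMdef]
    field_simp
    have hD : c * Tb + S * Δ * k ≠ 0 := by intro h0; apply hEne; linear_combination h0
    have hz : -h + Δ ^ 2 * (s * (-(h * s) + 1) + -(h * k ^ 2)) / (c * Tb + S * Δ * k) ^ 2 = 0 := by
      rw [neg_add_eq_zero, eq_div_iff (pow_ne_zero 2 hD)]
      linear_combination key + (h * Δ ^ 2) * pyth
    rw [hz]; ring
  have stat2 : S ^ 2 / c * θdots +
      M * ((rdots + τ⁻¹ * S) * s + θdots * (S / c) * k) * (S / c) * k = 0 := by
    rw [hrdots, hθdots, hMdef]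
    field_simp
    have hD : c * Tb + S * k * Δ ≠ 0 := by intro h0; apply hEne; linear_combination h0
    have hz : -h + Δ ^ 2 * (s * (-(h * s) + 1) + -(h * k ^ 2)) / (c * Tb + S * k * Δ) ^ 2 = 0 := by
      rw [neg_add_eq_zero, eq_div_iff (pow_ne_zero 2 hD)]
      linear_combination key + (h * Δ ^ 2) * pyth
    rw [hz]; ring
  have star : ∀ a b : ℝ, f a b = f rdots θdots +
      (c * (a - rdots) ^ 2 + S ^ 2 / c * (b - θdots) ^ 2 +
        M * ((a - rdots) * s + (b - θdots) * (S / c) * k) ^ 2) := by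
    intro a b
    linear_combination (gform a b) - (gform rdots θdots) +
      (2 * (a - rdots)) * stat1 + (2 * (b - θdots)) * stat2
  have hq : ∀ u v : ℝ, 0 ≤ c * u ^ 2 + S ^ 2 / c * v ^ 2 +
      M * (u * s + v * (S / c) * k) ^ 2 := by
    intro u v
    have h1 : 0 ≤ c * u ^ 2 := by positivity
    have h2 : 0 ≤ S ^ 2 / c * v ^ 2 := by positivity
    have h3 : 0 ≤ M * (u * s + v * (S / c) * k) ^ 2 := mul_nonneg hM (sq_nonneg _)
    linarith
  refine ⟨⟨convex_univ, ?_⟩, ?_, ?_⟩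
  · intro x _ y _ hxy p q hp hq' hpq
    simp only [Prod.smul_fst, Prod.smul_snd, Prod.fst_add, Prod.snd_add, smul_eq_mul]
    have hq1 : q = 1 - p := by linarith
    subst hq1
    have expand : p * f x.1 x.2 + (1 - p) * f y.1 y.2 -
        f (p * x.1 + (1 - p) * y.1) (p * x.2 + (1 - p) * y.2) =
        p * (1 - p) * (c * (x.1 - y.1) ^ 2 + S ^ 2 / c * (x.2 - y.2) ^ 2 +
          M * ((x.1 - y.1) * s + (x.2 - y.2) * (S / c) * k) ^ 2) := by
      rw [gform x.1 x.2, gform y.1 y.2,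
        gform (p * x.1 + (1 - p) * y.1) (p * x.2 + (1 - p) * y.2)]
      ring
    have hne : x.1 ≠ y.1 ∨ x.2 ≠ y.2 := by
      rw [Ne, Prod.ext_iff, not_and_or] at hxy
      exact hxy
    have h3 : 0 ≤ M * ((x.1 - y.1) * s + (x.2 - y.2) * (S / c) * k) ^ 2 :=
      mul_nonneg hM (sq_nonneg _)
    have hpos : 0 < c * (x.1 - y.1) ^ 2 + S ^ 2 / c * (x.2 - y.2) ^ 2 +
        M * ((x.1 - y.1) * s + (x.2 - y.2) * (S / c) * k) ^ 2 := by
      rcases hne with hne | hne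
      · have h1 : 0 < c * (x.1 - y.1) ^ 2 := by
          have : (x.1 - y.1) ≠ 0 := sub_ne_zero.mpr hne
          positivity
        have h2 : 0 ≤ S ^ 2 / c * (x.2 - y.2) ^ 2 := by positivity
        linarith
      · have h1 : 0 < S ^ 2 / c * (x.2 - y.2) ^ 2 := by
          have : (x.2 - y.2) ≠ 0 := sub_ne_zero.mpr hne
          positivity
        have h2 : 0 ≤ c * (x.1 - y.1) ^ 2 := by positivity
        linarith
    linarith [expand, mul_pos (mul_pos hp hq') hpos]
  · intro a b
    rw [star a b]
    have := hq (a - rdots) (b - θdots)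
    linarith
  · intro a b hab
    rw [star a b] at hab
    have h0 : c * (a - rdots) ^ 2 + S ^ 2 / c * (b - θdots) ^ 2 +
        M * ((a - rdots) * s + (b - θdots) * (S / c) * k) ^ 2 = 0 := by linarith
    have h3 : 0 ≤ M * ((a - rdots) * s + (b - θdots) * (S / c) * k) ^ 2 :=
      mul_nonneg hM (sq_nonneg _)
    have h1 : 0 ≤ c * (a - rdots) ^ 2 := by positivity
    have h2 : 0 ≤ S ^ 2 / c * (b - θdots) ^ 2 := by positivity
    have ha : a - rdots = 0 := by
      by_contra hne
      have : 0 < c * (a - rdots) ^ 2 := by positivity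
      linarith
    have hb : b - θdots = 0 := by
      by_contra hne
      have : 0 < S ^ 2 / c * (b - θdots) ^ 2 := by positivity
      linarith
    exact ⟨by linarith, by linarith⟩
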